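/- Let f_1,...,f_k be C^1 diffeomorphisms of the circle generating a forward and backward minimal IFS. If IFS(f_1,...,f_k) has a hyperbolic attracting periodic point, then the hyperbolic attracting periodic points of IFS(f_1,...,f_k) are dense in S^1. -/

import Mathlib

open Set Filter Topology

/-- Composition of generators (given by degree-one lifts) along a finite word:
`[i₁, ..., iₙ] ↦ f_{iₙ} ∘ ... ∘ f_{i₁}`. -/
def listComp {k : ℕ} (f : Fin k → ℝ → ℝ) (l : List (Fin k)) : ℝ → ℝ :=
  fun x => l.foldl (fun y i => f i y) x

section Helpers
variable {k : ℕ} {f finv : Fin k → ℝ → ℝ}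

lemma listComp_cons (i : Fin k) (l : List (Fin k)) (x : ℝ) :
    listComp f (i :: l) x = listComp f l (f i x) := rfl

lemma listComp_append (a b : List (Fin k)) (x : ℝ) :
    listComp f (a ++ b) x = listComp f b (listComp f a x) := by
  simp [listComp, List.foldl_append]

lemma listComp_contDiff (hf : ∀ i, ContDiff ℝ 1 (f i)) (l : List (Fin k)) :
    ContDiff ℝ 1 (listComp f l) := by
  induction l with
  | nil => exact contDiff_id
  | cons i l ih =>
    have : listComp f (i :: l) = (listComp f l) ∘ (f i) := rfl
    rw [this]
    exact ih.comp (hf i)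

lemma commute_one_int {φ : ℝ → ℝ} (hφ : ∀ x, φ (x + 1) = φ x + 1) (n : ℤ) (x : ℝ) :
    φ (x + n) = φ x + n := by
  induction n using Int.induction_on with
  | zero => simp
  | succ n ih =>
    have := hφ (x + n)
    push_cast
    push_cast at ih this
    rw [show x + (n + 1) = x + n + 1 by ring, this, ih]; ring
  | pred n ih =>
    have := hφ (x + (-n - 1 : ℤ))
    push_cast at ih this ⊢
    rw [show (x + (-n - 1) + 1 : ℝ) = x + -n by ring] at this
    linarith [ih, this]

lemma listComp_lift (hlift : ∀ i x, f i (x + 1) = f i x + 1) (l : List (Fin k)) (x : ℝ) :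
    listComp f l (x + 1) = listComp f l x + 1 := by
  induction l generalizing x with
  | nil => rfl
  | cons i l ih => rw [listComp_cons, listComp_cons, hlift, ih]

lemma listComp_inv (hinv₂ : ∀ i x, f i (finv i x) = x) (w : List (Fin k)) (x : ℝ) :
    listComp f w.reverse (listComp finv w x) = x := by
  induction w generalizing x with
  | nil => rfl
  | cons i w ih =>
    rw [listComp_cons, List.reverse_cons, listComp_append, ih, listComp_cons]
    exact hinv₂ i x

lemma deriv_per {φ : ℝ → ℝ} (hφ : ∀ x, φ (x + 1) = φ x + 1) (n : ℤ) (x : ℝ) :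
    deriv φ (x + n) = deriv φ x := by
  have h1 : (fun y => φ (y + (n : ℝ))) = fun y => φ y + (n : ℝ) :=
    funext fun y => commute_one_int hφ n y
  have := deriv_comp_add_const φ (n : ℝ) (x := x)
  rw [h1] at this
  rw [← this, deriv_add_const]

lemma circle_eq_of_int {a b : ℝ} (n : ℤ) (h : b = a + n) :
    (a : AddCircle (1 : ℝ)) = (b : AddCircle (1 : ℝ)) := by
  rw [QuotientAddGroup.eq_iff_sub_mem, AddSubgroup.mem_zmultiples_iff]
  exact ⟨-n, by rw [zsmul_one]; push_cast; rw [h]; ring⟩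

lemma circle_eq_iff {a b : ℝ} :
    (a : AddCircle (1 : ℝ)) = (b : AddCircle (1 : ℝ)) ↔ ∃ n : ℤ, b = a + n := by
  constructor
  · intro h
    rw [QuotientAddGroup.eq_iff_sub_mem, AddSubgroup.mem_zmultiples_iff] at h
    obtain ⟨n, hn⟩ := h
    rw [zsmul_one] at hn
    exact ⟨-n, by push_cast; linarith⟩
  · rintro ⟨n, rfl⟩; exact circle_eq_of_int n rfl

lemma lip_on_Icc {φ : ℝ → ℝ} (hφ : ContDiff ℝ 1 φ) {a b C : ℝ}
    (hC : ∀ y ∈ Icc a b, |deriv φ y| ≤ C) {y z : ℝ}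
    (hy : y ∈ Icc a b) (hz : z ∈ Icc a b) : |φ y - φ z| ≤ C * |y - z| := by
  have h1 : ∀ u ∈ Icc a b, HasDerivWithinAt φ (deriv φ u) (Icc a b) u := fun u _ =>
    ((hφ.differentiable one_ne_zero).differentiableAt.hasDerivAt).hasDerivWithinAt
  have := (convex_Icc a b).norm_image_sub_le_of_norm_hasDerivWithin_le h1
    (fun u hu => by rw [Real.norm_eq_abs]; exact hC u hu) hz hy
  simpa [Real.norm_eq_abs] using this

lemma abs_deriv_le_of_lip {φ : ℝ → ℝ} {a K ρ : ℝ} (hρ : 0 < ρ)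
    (hd : DifferentiableAt ℝ φ a)
    (hl : ∀ y, |y - a| ≤ ρ → |φ y - φ a| ≤ K * |y - a|) : |deriv φ a| ≤ K := by
  have hslope : Tendsto (slope φ a) (nhdsWithin a {a}ᶜ) (nhds (deriv φ a)) :=
    hasDerivAt_iff_tendsto_slope.mp hd.hasDerivAt
  have habs : Tendsto (fun y => |slope φ a y|) (nhdsWithin a {a}ᶜ) (nhds |deriv φ a|) :=
    hslope.abs
  refine le_of_tendsto habs ?_
  filter_upwards [self_mem_nhdsWithin,
    mem_nhdsWithin_of_mem_nhds (Metric.closedBall_mem_nhds a hρ)] with y hy hy2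
  have hne : y - a ≠ 0 := sub_ne_zero.mpr hy
  have h2 : |y - a| ≤ ρ := by simpa [Real.dist_eq] using hy2
  rw [slope_def_field, div_eq_mul_inv, abs_mul, abs_inv]
  calc |φ y - φ a| * |y - a|⁻¹ ≤ (K * |y - a|) * |y - a|⁻¹ :=
        mul_le_mul_of_nonneg_right (hl y h2) (by positivity)
    _ = K := by field_simp

lemma listComp_join_replicate (f : Fin k → ℝ → ℝ) (l₀ : List (Fin k)) (n : ℕ) (x : ℝ) :
    listComp f (List.flatten (List.replicate n l₀)) x = (listComp f l₀)^[n] x := by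
  induction n generalizing x with
  | zero => rfl
  | succ n ih =>
    rw [List.replicate_succ, List.flatten_cons, listComp_append, ih,
      Function.iterate_succ_apply]

lemma mem_Icc_abs {x c δ : ℝ} : x ∈ Icc (c - δ) (c + δ) ↔ |x - c| ≤ δ := by
  rw [abs_le]; constructor <;> intro h <;> constructor <;> simp at h ⊢ <;> linarith [h.1, h.2]

lemma iter_contract {H : ℝ → ℝ} {x₁ δ μ : ℝ} (hδ : 0 ≤ δ) (hμ0 : 0 ≤ μ) (hμ1 : μ ≤ 1)
    (hfix : H x₁ = x₁)
    (hlip : ∀ y ∈ Icc (x₁ - δ) (x₁ + δ), ∀ z ∈ Icc (x₁ - δ) (x₁ + δ),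
      |H y - H z| ≤ μ * |y - z|) :
    ∀ n, ∀ y ∈ Icc (x₁ - δ) (x₁ + δ), H^[n] y ∈ Icc (x₁ - δ) (x₁ + δ) ∧
      ∀ z ∈ Icc (x₁ - δ) (x₁ + δ), |H^[n] y - H^[n] z| ≤ μ ^ n * |y - z| := by
  intro n
  induction n with
  | zero => intro y hy; exact ⟨hy, fun z _ => by simp⟩
  | succ n ih =>
    intro y hy
    obtain ⟨hmem, hl⟩ := ih y hy
    have hx₁ : x₁ ∈ Icc (x₁ - δ) (x₁ + δ) := mem_Icc_abs.mpr (by simpa using hδ)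
    constructor
    · rw [Function.iterate_succ_apply', mem_Icc_abs]
      have h1 : |H (H^[n] y) - H x₁| ≤ μ * |H^[n] y - x₁| := hlip _ hmem _ hx₁
      rw [hfix] at h1
      have h2 : |H^[n] y - x₁| ≤ δ := mem_Icc_abs.mp hmem
      nlinarith [abs_nonneg (H^[n] y - x₁)]
    · intro z hz
      obtain ⟨hmemz, _⟩ := ih z hz
      rw [Function.iterate_succ_apply', Function.iterate_succ_apply']
      calc |H (H^[n] y) - H (H^[n] z)| ≤ μ * |H^[n] y - H^[n] z| := hlip _ hmem _ hmemz
        _ ≤ μ * (μ ^ n * |y - z|) := mul_le_mul_of_nonneg_left (hl z hz) hμ0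
        _ = μ ^ (n + 1) * |y - z| := by ring

lemma iter_shift {h : ℝ → ℝ} {m : ℤ} (hcom : ∀ (n : ℤ) (x : ℝ), h (x + n) = h x + n) :
    ∀ (n : ℕ) (x : ℝ), h^[n] x = (fun y => h y - (m : ℝ))^[n] x + (n : ℝ) * m := by
  intro n
  induction n with
  | zero => intro x; simp
  | succ n ih =>
    intro x
    rw [Function.iterate_succ_apply', Function.iterate_succ_apply', ih]
    have : ((fun y => h y - (m : ℝ))^[n] x + (n : ℝ) * m)
        = (fun y => h y - (m : ℝ))^[n] x + ((n * m : ℤ) : ℝ) := by push_cast; ring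
    rw [this, hcom]
    push_cast; ring

end Helpers

/-- Circle diffeomorphisms are represented by their degree-one lifts. -/
theorem dense_hyperbolic_attracting_periodic_points
    {k : ℕ} (f finv : Fin k → ℝ → ℝ)
    (hf : ∀ i, ContDiff ℝ 1 (f i)) (hfinv : ∀ i, ContDiff ℝ 1 (finv i))
    (hmono : ∀ i, StrictMono (f i))
    (hlift : ∀ i x, f i (x + 1) = f i x + 1)
    (hinv₁ : ∀ i x, finv i (f i x) = x) (hinv₂ : ∀ i x, f i (finv i x) = x)
    -- forward minimality of the IFS on the circle
    (hfwd : ∀ x : ℝ, Dense {z : AddCircle (1 : ℝ) |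
      ∃ l : List (Fin k), l ≠ [] ∧ z = ((listComp f l x : ℝ) : AddCircle (1 : ℝ))})
    -- backward minimality of the IFS on the circle
    (hbwd : ∀ x : ℝ, Dense {z : AddCircle (1 : ℝ) |
      ∃ l : List (Fin k), l ≠ [] ∧ z = ((listComp finv l x : ℝ) : AddCircle (1 : ℝ))})
    -- there exists a hyperbolic attracting periodic point of the IFS
    (hexists : ∃ (l : List (Fin k)) (x : ℝ), l ≠ [] ∧
      ((listComp f l x : ℝ) : AddCircle (1 : ℝ)) = ((x : ℝ) : AddCircle (1 : ℝ)) ∧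
      |deriv (listComp f l) x| < 1) :
    Dense {q : AddCircle (1 : ℝ) | ∃ (l : List (Fin k)) (x : ℝ), l ≠ [] ∧
      ((x : ℝ) : AddCircle (1 : ℝ)) = q ∧
      ((listComp f l x : ℝ) : AddCircle (1 : ℝ)) = q ∧
      |deriv (listComp f l) x| < 1} := by
  obtain ⟨l₀, x₀, hl₀ne, hx₀eq, hx₀der⟩ := hexists
  set h : ℝ → ℝ := listComp f l₀ with hh
  have hhC : ContDiff ℝ 1 h := listComp_contDiff hf l₀
  have hh1 : ∀ x, h (x + 1) = h x + 1 := fun x => listComp_lift hlift l₀ x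
  have hhint : ∀ (n : ℤ) (x : ℝ), h (x + n) = h x + n := fun n x => commute_one_int hh1 n x
  -- the rotation number m₀
  obtain ⟨m', hm'⟩ := circle_eq_iff.mp hx₀eq
  set m₀ : ℤ := -m' with hm₀
  have hfix₀ : h x₀ = x₀ + m₀ := by push_cast [hm₀]; linarith [hm']
  -- contraction constant
  set μ : ℝ := (1 + |deriv h x₀|) / 2 with hμ
  have hμ0 : 0 < μ := by positivity
  have hμ1 : μ < 1 := by rw [hμ]; linarith
  have hμx₀ : |deriv h x₀| < μ := by rw [hμ]; linarith
  -- neighborhood where the derivative is ≤ μ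
  have hderivC : Continuous fun y => |deriv h y| := (hhC.continuous_deriv le_rfl).abs
  have hSopen : IsOpen {y : ℝ | |deriv h y| < μ} := isOpen_lt hderivC continuous_const
  obtain ⟨δ₀, hδ₀pos, hδ₀⟩ := Metric.isOpen_iff.mp hSopen x₀ hμx₀
  set δ : ℝ := δ₀ / 2 with hδdef
  have hδ : 0 < δ := by positivity
  have hderJ : ∀ y : ℝ, |y - x₀| ≤ δ → |deriv h y| ≤ μ := by
    intro y hy
    have : y ∈ Metric.ball x₀ δ₀ := by
      rw [Metric.mem_ball, Real.dist_eq]; linarith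
    exact le_of_lt (hδ₀ this)
  -- start the density argument
  rw [dense_iff_inter_open]
  intro U hU hUne
  obtain ⟨q0, hq0⟩ := hUne
  obtain ⟨qt, rfl⟩ := QuotientAddGroup.mk_surjective q0
  have hVopen : IsOpen ((fun x : ℝ => (x : AddCircle (1 : ℝ))) ⁻¹' U) :=
    hU.preimage (AddCircle.continuous_mk' 1)
  obtain ⟨ε, hεpos, hball⟩ := Metric.isOpen_iff.mp hVopen qt hq0
  -- backward minimality: find y₀ close to qt mapped onto the orbit of x₀
  have hOopen : IsOpen ((fun x : ℝ => (x : AddCircle (1 : ℝ))) ''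
      Ioo (qt - ε / 2) (qt + ε / 2)) :=
    QuotientAddGroup.isOpenMap_coe _ isOpen_Ioo
  have hOne : ((fun x : ℝ => (x : AddCircle (1 : ℝ))) ''
      Ioo (qt - ε / 2) (qt + ε / 2)).Nonempty :=
    ⟨(qt : AddCircle (1 : ℝ)), ⟨qt, mem_Ioo.mpr ⟨by linarith, by linarith⟩, rfl⟩⟩
  obtain ⟨z, hzO, w, hwne, hzw⟩ :=
    dense_iff_inter_open.mp (hbwd x₀) _ hOopen hOne
  obtain ⟨y₀, hy₀Ioo, hy₀z⟩ := hzO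
  set g : ℝ → ℝ := listComp f w.reverse with hg
  have hgC : ContDiff ℝ 1 g := listComp_contDiff hf w.reverse
  have hg1 : ∀ x, g (x + 1) = g x + 1 := fun x => listComp_lift hlift w.reverse x
  have hgint : ∀ (n : ℤ) (x : ℝ), g (x + n) = g x + n := fun n x => commute_one_int hg1 n x
  have hgtil : g (listComp finv w x₀) = x₀ := listComp_inv hinv₂ w x₀
  obtain ⟨j, hj⟩ := circle_eq_iff.mp (hy₀z.trans hzw)
  -- j : listComp finv w x₀ = y₀ + j
  set x₁ : ℝ := g y₀ with hx₁def
  have hx₁ : x₁ = x₀ + (-j : ℤ) := by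
    have : g (y₀ + (j : ℝ)) = x₀ := by rw [← hj]; exact hgtil
    have h2 := hgint (-j) (y₀ + (j : ℝ))
    push_cast at h2 ⊢
    rw [show y₀ + (j : ℝ) + -(j : ℝ) = y₀ by ring] at h2
    rw [hx₁def, h2, this]
  -- properties of h near x₁
  have hfix₁ : h x₁ = x₁ + m₀ := by
    rw [hx₁, hhint (-j) x₀, hfix₀]; push_cast; ring
  have hderJ₁ : ∀ y ∈ Icc (x₁ - δ) (x₁ + δ), |deriv h y| ≤ μ := by
    intro y hy
    have h1 : deriv h y = deriv h (y + (j : ℝ)) := by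
      have := deriv_per hh1 (-j) (y + (j : ℝ))
      push_cast at this
      rw [show y + (j:ℝ) + -(j:ℝ) = y by ring] at this
      exact this
    rw [h1]
    apply hderJ
    have := mem_Icc_abs.mp hy
    have hx : x₀ = x₁ + (j : ℝ) := by rw [hx₁]; push_cast; ring
    rw [hx]
    rw [show y + (j:ℝ) - (x₁ + (j:ℝ)) = y - x₁ by ring]
    exact this
  have hlipJ₁ : ∀ y ∈ Icc (x₁ - δ) (x₁ + δ), ∀ z ∈ Icc (x₁ - δ) (x₁ + δ),
      |h y - h z| ≤ μ * |y - z| := fun y hy z hz => lip_on_Icc hhC hderJ₁ hy hz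
  set H : ℝ → ℝ := fun y => h y - (m₀ : ℝ) with hH
  have hHfix : H x₁ = x₁ := by rw [hH]; simp only; rw [hfix₁]; ring
  have hHlip : ∀ y ∈ Icc (x₁ - δ) (x₁ + δ), ∀ z ∈ Icc (x₁ - δ) (x₁ + δ),
      |H y - H z| ≤ μ * |y - z| := by
    intro y hy z hz
    have := hlipJ₁ y hy z hz
    simpa [hH] using this
  have hiter := iter_contract hδ.le hμ0.le hμ1.le hHfix hHlip
  -- bound for the derivative of g near y₀
  obtain ⟨yM, _, hyM⟩ := isCompact_Icc.exists_isMaxOn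
    (nonempty_Icc.mpr (by linarith : y₀ - 1 ≤ y₀ + 1))
    ((hgC.continuous_deriv le_rfl).abs.continuousOn)
  set C : ℝ := max |deriv g yM| 1 with hC
  have hC1 : (1 : ℝ) ≤ C := le_max_right _ _
  have hC0 : (0 : ℝ) < C := by linarith
  have hCg : ∀ y ∈ Icc (y₀ - 1) (y₀ + 1), |deriv g y| ≤ C := fun y hy =>
    le_trans (hyM hy) (le_max_left _ _)
  -- choose the radius ρ
  set ρ : ℝ := min (min (δ / C) (ε / 2)) 1 with hρdef
  have hρ : 0 < ρ := by
    apply lt_min (lt_min (by positivity) (by positivity)) one_pos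
  have hρδ : ρ * C ≤ δ := by
    have h1 : ρ ≤ δ / C := le_trans (min_le_left _ _) (min_le_left _ _)
    calc ρ * C ≤ (δ / C) * C := mul_le_mul_of_nonneg_right h1 hC0.le
      _ = δ := by field_simp
  have hρε : ρ ≤ ε / 2 := le_trans (min_le_left _ _) (min_le_right _ _)
  have hρ1 : ρ ≤ 1 := min_le_right _ _
  -- forward minimality: find word v with c x₁ close to y₀ mod 1
  have hO'open : IsOpen ((fun x : ℝ => (x : AddCircle (1 : ℝ))) ''
      Ioo (y₀ - ρ / 4) (y₀ + ρ / 4)) :=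
    QuotientAddGroup.isOpenMap_coe _ isOpen_Ioo
  have hO'ne : ((fun x : ℝ => (x : AddCircle (1 : ℝ))) ''
      Ioo (y₀ - ρ / 4) (y₀ + ρ / 4)).Nonempty :=
    ⟨(y₀ : AddCircle (1 : ℝ)), ⟨y₀, mem_Ioo.mpr ⟨by linarith, by linarith⟩, rfl⟩⟩
  obtain ⟨z', hz'O, v, hvne, hz'v⟩ :=
    dense_iff_inter_open.mp (hfwd x₁) _ hO'open hO'ne
  obtain ⟨u, huIoo, huz'⟩ := hz'O
  set c : ℝ → ℝ := listComp f v with hc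
  have hcC : ContDiff ℝ 1 c := listComp_contDiff hf v
  have hc1 : ∀ x, c (x + 1) = c x + 1 := fun x => listComp_lift hlift v x
  have hcint : ∀ (n : ℤ) (x : ℝ), c (x + n) = c x + n := fun n x => commute_one_int hc1 n x
  obtain ⟨p, hp⟩ := circle_eq_iff.mp (huz'.trans hz'v)
  -- hp : c x₁ = u + p
  have hu1 : |u - y₀| < ρ / 4 := by
    rw [abs_sub_lt_iff]; obtain ⟨h1, h2⟩ := huIoo; constructor <;> linarith
  -- bound for the derivative of c on J₁
  obtain ⟨xM, _, hxM⟩ := isCompact_Icc.exists_isMaxOn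
    (nonempty_Icc.mpr (by linarith : x₁ - δ ≤ x₁ + δ))
    ((hcC.continuous_deriv le_rfl).abs.continuousOn)
  set C' : ℝ := max |deriv c xM| 1 with hC'
  have hC'1 : (1 : ℝ) ≤ C' := le_max_right _ _
  have hC'0 : (0 : ℝ) < C' := by linarith
  have hC'c : ∀ y ∈ Icc (x₁ - δ) (x₁ + δ), |deriv c y| ≤ C' := fun y hy =>
    le_trans (hxM hy) (le_max_left _ _)
  -- choose n
  obtain ⟨n, hn⟩ := exists_pow_lt_of_lt_one
    (show (0:ℝ) < min (ρ / (4 * C' * δ)) (1 / (2 * C * C')) by positivity) hμ1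
  have hnA : C' * (μ ^ n * δ) ≤ ρ / 4 := by
    have h1 : μ ^ n ≤ ρ / (4 * C' * δ) := le_of_lt (lt_of_lt_of_le hn (min_le_left _ _))
    calc C' * (μ ^ n * δ) ≤ C' * ((ρ / (4 * C' * δ)) * δ) := by
          apply mul_le_mul_of_nonneg_left (mul_le_mul_of_nonneg_right h1 hδ.le) hC'0.le
      _ = ρ / 4 := by field_simp
  have hnB : C' * μ ^ n * C ≤ 1 / 2 := by
    have h1 : μ ^ n ≤ 1 / (2 * C * C') := le_of_lt (lt_of_lt_of_le hn (min_le_right _ _))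
    calc C' * μ ^ n * C ≤ C' * (1 / (2 * C * C')) * C := by
          apply mul_le_mul_of_nonneg_right (mul_le_mul_of_nonneg_left h1 hC'0.le) hC0.le
      _ = 1 / 2 := by field_simp
  -- the full word and map
  set L : List (Fin k) := w.reverse ++ (List.flatten (List.replicate n l₀) ++ v) with hL
  have hLne : L ≠ [] := by
    rw [hL]
    intro hE
    rw [List.append_eq_nil_iff] at hE
    rw [List.append_eq_nil_iff] at hE
    exact hvne hE.2.2
  set Φ : ℝ → ℝ := listComp f L with hΦdef
  have hΦC : ContDiff ℝ 1 Φ := listComp_contDiff hf L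
  have hΦeq : ∀ y, Φ y = c (h^[n] (g y)) := by
    intro y
    rw [hΦdef, hL, listComp_append, listComp_append, listComp_join_replicate]
  -- main estimates
  set J₁ : Set ℝ := Icc (x₁ - δ) (x₁ + δ) with hJ₁
  have hgmem : ∀ y, |y - y₀| ≤ ρ → g y ∈ J₁ := by
    intro y hy
    rw [hJ₁, mem_Icc_abs]
    have hyI : y ∈ Icc (y₀ - 1) (y₀ + 1) := mem_Icc_abs.mpr (le_trans hy hρ1)
    have hy₀I : y₀ ∈ Icc (y₀ - 1) (y₀ + 1) := mem_Icc_abs.mpr (by simp)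
    have := lip_on_Icc hgC hCg hyI hy₀I
    calc |g y - x₁| = |g y - g y₀| := by rw [hx₁def]
      _ ≤ C * |y - y₀| := this
      _ ≤ C * ρ := mul_le_mul_of_nonneg_left hy hC0.le
      _ ≤ δ := by linarith [hρδ]
  have hΦkey : ∀ y, |y - y₀| ≤ ρ →
      Φ y = c (H^[n] (g y)) + ((n : ℝ) * m₀) ∧
      |c (H^[n] (g y)) - c x₁| ≤ C' * (μ ^ n * δ) := by
    intro y hy
    have hgy : g y ∈ J₁ := hgmem y hy
    obtain ⟨hmem, hlipn⟩ := hiter n (g y) hgy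
    constructor
    · rw [hΦeq]
      have h1 : h^[n] (g y) = H^[n] (g y) + (n : ℝ) * m₀ := iter_shift hhint n (g y)
      rw [h1]
      have h2 : ((n : ℝ) * (m₀ : ℝ)) = (((n : ℤ) * m₀ : ℤ) : ℝ) := by push_cast; ring
      rw [h2, hcint]
    · have hHn : |H^[n] (g y) - x₁| ≤ μ ^ n * δ := by
        have hx₁J : x₁ ∈ J₁ := mem_Icc_abs.mpr (by simpa using hδ.le)
        have := hlipn x₁ hx₁J
        rw [Function.iterate_fixed hHfix n] at this
        calc |H^[n] (g y) - x₁| ≤ μ ^ n * |g y - x₁| := this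
          _ ≤ μ ^ n * δ := mul_le_mul_of_nonneg_left (mem_Icc_abs.mp hgy) (by positivity)
      have hcx₁ : x₁ ∈ J₁ := mem_Icc_abs.mpr (by simpa using hδ.le)
      calc |c (H^[n] (g y)) - c x₁| ≤ C' * |H^[n] (g y) - x₁| :=
            lip_on_Icc hcC hC'c hmem hcx₁
        _ ≤ C' * (μ ^ n * δ) := mul_le_mul_of_nonneg_left hHn hC'0.le
  -- Ψ maps I strictly inside and is 1/2-Lipschitz
  set N : ℤ := n * m₀ + p with hN
  have hΨin : ∀ y, |y - y₀| ≤ ρ → |Φ y - (N : ℝ) - y₀| < ρ / 2 := by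
    intro y hy
    obtain ⟨h1, h2⟩ := hΦkey y hy
    have h3 : Φ y - (N : ℝ) - y₀ = (c (H^[n] (g y)) - c x₁) + (u - y₀) := by
      rw [h1, hp, hN]; push_cast; ring
    rw [h3]
    calc |(c (H^[n] (g y)) - c x₁) + (u - y₀)|
        ≤ |c (H^[n] (g y)) - c x₁| + |u - y₀| := abs_add_le _ _
      _ < ρ / 4 + ρ / 4 := by
          apply add_lt_add_of_le_of_lt (le_trans h2 hnA) hu1
      _ = ρ / 2 := by ring
  have hΨlip : ∀ y, |y - y₀| ≤ ρ → ∀ z, |z - y₀| ≤ ρ →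
      |Φ y - Φ z| ≤ (1 / 2) * |y - z| := by
    intro y hy z hz
    obtain ⟨h1y, _⟩ := hΦkey y hy
    obtain ⟨h1z, _⟩ := hΦkey z hz
    have hgy : g y ∈ J₁ := hgmem y hy
    have hgz : g z ∈ J₁ := hgmem z hz
    obtain ⟨hmemy, hlipy⟩ := hiter n (g y) hgy
    obtain ⟨hmemz, _⟩ := hiter n (g z) hgz
    have hstep1 : |H^[n] (g y) - H^[n] (g z)| ≤ μ ^ n * |g y - g z| := hlipy (g z) hgz
    have hyI : y ∈ Icc (y₀ - 1) (y₀ + 1) := mem_Icc_abs.mpr (le_trans hy hρ1)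
    have hzI : z ∈ Icc (y₀ - 1) (y₀ + 1) := mem_Icc_abs.mpr (le_trans hz hρ1)
    have hstep2 : |g y - g z| ≤ C * |y - z| := lip_on_Icc hgC hCg hyI hzI
    have hstep3 : |c (H^[n] (g y)) - c (H^[n] (g z))| ≤
        C' * |H^[n] (g y) - H^[n] (g z)| := lip_on_Icc hcC hC'c hmemy hmemz
    have h4 : Φ y - Φ z = c (H^[n] (g y)) - c (H^[n] (g z)) := by
      rw [h1y, h1z]; ring
    rw [h4]
    calc |c (H^[n] (g y)) - c (H^[n] (g z))| ≤ C' * |H^[n] (g y) - H^[n] (g z)| := hstep3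
      _ ≤ C' * (μ ^ n * |g y - g z|) := mul_le_mul_of_nonneg_left hstep1 hC'0.le
      _ ≤ C' * (μ ^ n * (C * |y - z|)) := by
          apply mul_le_mul_of_nonneg_left (mul_le_mul_of_nonneg_left hstep2 (by positivity))
            hC'0.le
      _ = (C' * μ ^ n * C) * |y - z| := by ring
      _ ≤ (1 / 2) * |y - z| := mul_le_mul_of_nonneg_right hnB (abs_nonneg _)
  -- fixed point via IVT
  set e : ℝ → ℝ := fun y => (Φ y - (N : ℝ)) - y with he
  have heC : Continuous e := by
    apply Continuous.sub (Continuous.sub hΦC.continuous continuous_const) continuous_id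
  have hea : 0 < e (y₀ - ρ) := by
    have := hΨin (y₀ - ρ) (by rw [show y₀ - ρ - y₀ = -ρ by ring, abs_neg, abs_of_pos hρ])
    rw [abs_lt] at this
    rw [he]; simp only
    linarith [this.1]
  have heb : e (y₀ + ρ) < 0 := by
    have := hΨin (y₀ + ρ) (by rw [show y₀ + ρ - y₀ = ρ by ring, abs_of_pos hρ])
    rw [abs_lt] at this
    rw [he]; simp only
    linarith [this.2]
  have hIVT : (0 : ℝ) ∈ e '' Icc (y₀ - ρ) (y₀ + ρ) := by
    apply intermediate_value_Icc' (by linarith : y₀ - ρ ≤ y₀ + ρ) heC.continuousOn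
    exact mem_Icc.mpr ⟨heb.le, hea.le⟩
  obtain ⟨ys, hysI, hyse⟩ := hIVT
  have hysfix : Φ ys = ys + (N : ℝ) := by
    rw [he] at hyse; simp only at hyse; linarith
  have hysρ : |ys - y₀| ≤ ρ := mem_Icc_abs.mp hysI
  have hysclose : |ys - y₀| < ρ / 2 := by
    have := hΨin ys hysρ
    rw [hysfix] at this
    rw [show ys + (N:ℝ) - (N:ℝ) - y₀ = ys - y₀ by ring] at this
    exact this
  -- derivative bound at ys
  have hder : |deriv Φ ys| ≤ 1 / 2 := by
    apply abs_deriv_le_of_lip (show (0:ℝ) < ρ/2 by linarith)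
      (hΦC.differentiable one_ne_zero).differentiableAt
    intro y hy
    apply hΨlip
    · calc |y - y₀| ≤ |y - ys| + |ys - y₀| := abs_sub_le _ _ _
        _ ≤ ρ / 2 + ρ / 2 := add_le_add hy hysclose.le
        _ = ρ := by ring
    · exact hysρ
  -- conclusion
  refine ⟨(ys : AddCircle (1 : ℝ)), ?_, L, ys, hLne, rfl, ?_, ?_⟩
  · -- membership in U
    apply hball
    rw [Metric.mem_ball, Real.dist_eq]
    have h1 : |y₀ - qt| < ε / 2 := by
      rw [abs_sub_lt_iff]; obtain ⟨ha, hb⟩ := hy₀Ioo; constructor <;> linarith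
    calc |ys - qt| ≤ |ys - y₀| + |y₀ - qt| := abs_sub_le _ _ _
      _ < ρ / 2 + ε / 2 := add_lt_add hysclose h1
      _ ≤ ε := by linarith [hρε]
  · -- periodicity mod 1
    exact (circle_eq_of_int N hysfix).symm
  · -- hyperbolicity
    calc |deriv (listComp f L) ys| = |deriv Φ ys| := rfl
      _ ≤ 1 / 2 := hder
      _ < 1 := by norm_num
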